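/- Fix an integer m ≥ 1 and set N = 2^{m−1}. Let b, c, B be independent with b uniform on {0,…,N−1}, c uniform on {1,…,N}, B Bernoulli(1/2), and i = (b + c)·B + (b − N + 1 − c)·(1 − B). Then E[|i|] = N = 2^{m−1}. -/

import Mathlib

open MeasureTheory
open scoped ENNReal

private lemma bphmc_gauss_sum (n : ℕ) :
    (∑ k ∈ Finset.range n, (k : ℝ)) = n * (n - 1) / 2 := by
  induction n with
  | zero => simp
  | succ n ih =>
    rw [Finset.sum_range_succ, ih]
    push_cast
    ring

/-- The expected magnitude of the integration time index in exact biased progressive HMC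
with `m` doublings equals `N = 2^(m-1)`. -/
theorem exact_bphmc_expected_index_magnitude
    (m : ℕ) (hm : 1 ≤ m) (N : ℤ) (hN : N = 2 ^ (m - 1))
    {Ω : Type*} [MeasurableSpace Ω] (P : Measure Ω) [IsProbabilityMeasure P]
    (b c B : Ω → ℤ) (hb : Measurable b) (hc : Measurable c) (hB : Measurable B)
    -- b is uniform on {0, 1, …, N-1}
    (hbUnif : ∀ x : ℤ, P {ω | b ω = x} =
      if 0 ≤ x ∧ x ≤ N - 1 then (1 : ℝ≥0∞) / (N.toNat : ℝ≥0∞) else 0)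
    -- c is uniform on {1, …, N}
    (hcUnif : ∀ x : ℤ, P {ω | c ω = x} =
      if 1 ≤ x ∧ x ≤ N then (1 : ℝ≥0∞) / (N.toNat : ℝ≥0∞) else 0)
    -- B is Bernoulli(1/2) on {0, 1}
    (hBUnif : ∀ x : ℤ, P {ω | B ω = x} =
      if x = 0 ∨ x = 1 then (1 : ℝ≥0∞) / 2 else 0)
    -- b, c, B are independent
    (hIndep : ∀ x y z : ℤ, P {ω | b ω = x ∧ c ω = y ∧ B ω = z} =
      P {ω | b ω = x} * P {ω | c ω = y} * P {ω | B ω = z})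
    (i : Ω → ℤ)
    (hi : ∀ ω, i ω = (b ω + c ω) * B ω + (b ω - N + 1 - c ω) * (1 - B ω)) :
    ∫ ω, ((|i ω| : ℤ) : ℝ) ∂P = (N : ℝ) := by
  have hNpos : 0 < N := by rw [hN]; positivity
  obtain ⟨n, hnN⟩ : ∃ n : ℕ, (n : ℤ) = N := ⟨N.toNat, Int.toNat_of_nonneg hNpos.le⟩
  have hNtn : N.toNat = n := by omega
  have hnpos : 0 < n := by omega
  have hn0 : (n : ℝ) ≠ 0 := by exact_mod_cast hnpos.ne'
  -- the a.e. support lemma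
  have key : ∀ (f : Ω → ℤ) (Q : ℤ → Prop), (∀ x, ¬ Q x → P {ω | f ω = x} = 0) →
      ∀ᵐ ω ∂P, Q (f ω) := by
    intro f Q h
    rw [ae_iff]
    refine measure_mono_null (fun ω hω => ?_)
      ((measure_biUnion_null_iff (Set.to_countable {x : ℤ | ¬ Q x})).2
        (fun x hx => h x hx))
    exact Set.mem_biUnion hω rfl
  have hbae : ∀ᵐ ω ∂P, 0 ≤ b ω ∧ b ω ≤ N - 1 :=
    key b _ (fun x hx => by rw [hbUnif x, if_neg hx])
  have hcae : ∀ᵐ ω ∂P, 1 ≤ c ω ∧ c ω ≤ N :=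
    key c _ (fun x hx => by rw [hcUnif x, if_neg hx])
  have hBae : ∀ᵐ ω ∂P, B ω = 0 ∨ B ω = 1 :=
    key B _ (fun x hx => by rw [hBUnif x, if_neg hx])
  -- the map to ℤ³
  set T : Ω → ℤ × ℤ × ℤ := fun ω => (b ω, c ω, B ω) with hT
  have hTm : Measurable T := hb.prodMk (hc.prodMk hB)
  set F : ℤ × ℤ × ℤ → ℝ := fun p =>
    ((|(p.1 + p.2.1) * p.2.2 + (p.1 - N + 1 - p.2.1) * (1 - p.2.2)| : ℤ) : ℝ) with hF
  have hcomp : ∀ ω, ((|i ω| : ℤ) : ℝ) = F (T ω) := fun ω => by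
    simp only [hF, hT]; rw [hi ω]
  -- integrability
  have hmeas : Measurable fun ω => ((|i ω| : ℤ) : ℝ) := by
    have hi_meas : Measurable i := by
      have : i = fun ω => (b ω + c ω) * B ω + (b ω - N + 1 - c ω) * (1 - B ω) := funext hi
      rw [this]
      exact (((hb.add hc).mul hB).add
        ((((hb.sub measurable_const).add measurable_const).sub hc).mul
          (measurable_const.sub hB)))
    exact (measurable_of_countable (fun k : ℤ => ((|k| : ℤ) : ℝ))).comp hi_meas
  have hbound : ∀ᵐ ω ∂P, ‖((|i ω| : ℤ) : ℝ)‖ ≤ ((2 * N : ℤ) : ℝ) := by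
    filter_upwards [hbae, hcae, hBae] with ω h1 h2 h3
    rw [Real.norm_eq_abs, ← Int.cast_abs, abs_abs]
    have : |i ω| ≤ 2 * N := by
      rw [hi ω, abs_le]
      rcases h3 with h | h <;> rw [h] <;> constructor <;> nlinarith [h1.1, h1.2, h2.1, h2.2]
    exact_mod_cast this
  have hInt : Integrable (fun ω => ((|i ω| : ℤ) : ℝ)) P :=
    Integrable.mono' (integrable_const _) hmeas.aestronglyMeasurable hbound
  have hIntF : Integrable F (P.map T) := by
    rw [integrable_map_measure (measurable_of_countable F).aestronglyMeasurable
      hTm.aemeasurable]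
    have : F ∘ T = fun ω => ((|i ω| : ℤ) : ℝ) := funext fun ω => (hcomp ω).symm
    rw [this]; exact hInt
  -- rewrite the integral as a tsum
  have hmap : ∫ ω, ((|i ω| : ℤ) : ℝ) ∂P = ∑' p, ((P.map T) {p}).toReal • F p := by
    have hic := integral_countable' hIntF
    simp only [measureReal_def] at hic
    rw [← hic,
      integral_map hTm.aemeasurable (measurable_of_countable F).aestronglyMeasurable]
    exact integral_congr_ae (Filter.Eventually.of_forall hcomp)
  -- singleton masses
  have hsingle : ∀ p : ℤ × ℤ × ℤ, (P.map T) {p} =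
      (if 0 ≤ p.1 ∧ p.1 ≤ N - 1 then (1 : ℝ≥0∞) / (n : ℝ≥0∞) else 0) *
      (if 1 ≤ p.2.1 ∧ p.2.1 ≤ N then (1 : ℝ≥0∞) / (n : ℝ≥0∞) else 0) *
      (if p.2.2 = 0 ∨ p.2.2 = 1 then (1 : ℝ≥0∞) / 2 else 0) := by
    intro p
    rw [Measure.map_apply hTm (measurableSet_singleton p)]
    have : T ⁻¹' {p} = {ω | b ω = p.1 ∧ c ω = p.2.1 ∧ B ω = p.2.2} := by
      ext ω; simp [hT, Prod.ext_iff, and_assoc]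
    rw [this, hIndep, hbUnif, hcUnif, hBUnif, hNtn]
  rw [hmap]
  -- the tsum reduces to a finite sum
  set s : Finset (ℤ × ℤ × ℤ) :=
    (Finset.Icc 0 (N - 1)) ×ˢ ((Finset.Icc 1 N) ×ˢ ({0, 1} : Finset ℤ)) with hs
  have hzero : ∀ p ∉ s, ((P.map T) {p}).toReal • F p = 0 := by
    intro p hp
    simp only [hs, Finset.mem_product, Finset.mem_Icc, Finset.mem_insert,
      Finset.mem_singleton] at hp
    rw [hsingle p]
    have h3 : ¬(0 ≤ p.1 ∧ p.1 ≤ N - 1) ∨ ¬(1 ≤ p.2.1 ∧ p.2.1 ≤ N) ∨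
        ¬(p.2.2 = 0 ∨ p.2.2 = 1) := by tauto
    rcases h3 with h | h | h <;> rw [if_neg h] <;> simp
  rw [tsum_eq_sum hzero]
  -- convert Icc sums to range sums
  have hIcc0 : Finset.Icc (0 : ℤ) (N - 1) =
      (Finset.range n).map ⟨fun k : ℕ => (k : ℤ), show Function.Injective (fun k : ℕ => (k : ℤ)) from by intro a b h; simpa using h⟩ := by
    ext a
    simp only [Finset.mem_Icc, Finset.mem_map, Finset.mem_range,
      Function.Embedding.coeFn_mk]
    constructor
    · rintro ⟨h1, h2⟩; exact ⟨a.toNat, by omega, by omega⟩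
    · rintro ⟨k, hk, rfl⟩; omega
  have hIcc1 : Finset.Icc (1 : ℤ) N =
      (Finset.range n).map ⟨fun k : ℕ => (k : ℤ) + 1, show Function.Injective (fun k : ℕ => (k : ℤ) + 1) from by intro a b h; simpa using h⟩ := by
    ext a
    simp only [Finset.mem_Icc, Finset.mem_map, Finset.mem_range,
      Function.Embedding.coeFn_mk]
    constructor
    · rintro ⟨h1, h2⟩; exact ⟨(a - 1).toNat, by omega, by omega⟩
    · rintro ⟨k, hk, rfl⟩; omega
  rw [hs, Finset.sum_product, hIcc0]
  rw [Finset.sum_map]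
  simp only [Function.Embedding.coeFn_mk]
  have hinner : ∀ k1 ∈ Finset.range n,
      (∑ q ∈ (Finset.Icc 1 N) ×ˢ ({0, 1} : Finset ℤ),
        ((P.map T) {((k1 : ℤ), q)}).toReal • F ((k1 : ℤ), q)) =
      ∑ k2 ∈ Finset.range n,
        (1 / (n : ℝ) * (1 / (n : ℝ)) * (1 / 2)) * ((n : ℝ) + 1 + 2 * (k2 : ℝ)) := by
    intro k1 hk1
    rw [Finset.mem_range] at hk1
    rw [Finset.sum_product, hIcc1, Finset.sum_map]
    simp only [Function.Embedding.coeFn_mk]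
    refine Finset.sum_congr rfl (fun k2 hk2 => ?_)
    rw [Finset.mem_range] at hk2
    rw [Finset.sum_pair (by norm_num : (0 : ℤ) ≠ 1)]
    rw [hsingle, hsingle]
    simp only
    rw [if_pos ⟨by omega, by omega⟩, if_pos ⟨by omega, by omega⟩,
      if_pos (Or.inl trivial), if_pos (Or.inr trivial)]
    have hF0 : F ((k1 : ℤ), (k2 : ℤ) + 1, 0) = (N : ℝ) - 1 + ((k2 : ℝ) + 1) - (k1 : ℝ) := by
      simp only [hF]
      have h1 : ((k1 : ℤ) + ((k2 : ℤ) + 1)) * 0 +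
          ((k1 : ℤ) - N + 1 - ((k2 : ℤ) + 1)) * (1 - 0) =
          (k1 : ℤ) - N + 1 - ((k2 : ℤ) + 1) := by ring
      rw [h1, abs_of_nonpos (by omega)]
      push_cast
      ring
    have hF1 : F ((k1 : ℤ), (k2 : ℤ) + 1, 1) = (k1 : ℝ) + ((k2 : ℝ) + 1) := by
      simp only [hF]
      have h1 : ((k1 : ℤ) + ((k2 : ℤ) + 1)) * 1 +
          ((k1 : ℤ) - N + 1 - ((k2 : ℤ) + 1)) * (1 - 1) =
          (k1 : ℤ) + ((k2 : ℤ) + 1) := by ring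
      rw [h1, abs_of_nonneg (by omega)]
      push_cast
      ring
    rw [hF0, hF1]
    have hw : ((1 : ℝ≥0∞) / (n : ℝ≥0∞) * ((1 : ℝ≥0∞) / (n : ℝ≥0∞)) *
        ((1 : ℝ≥0∞) / 2)).toReal = 1 / (n : ℝ) * (1 / (n : ℝ)) * (1 / 2) := by
      simp [ENNReal.toReal_mul]
    rw [hw]
    have hNn : (N : ℝ) = (n : ℝ) := by exact_mod_cast hnN.symm
    rw [smul_eq_mul, smul_eq_mul, hNn]
    ring
  rw [Finset.sum_congr rfl hinner]
  -- final arithmetic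
  have hNn : (N : ℝ) = (n : ℝ) := by exact_mod_cast hnN.symm
  have hsum2 : ∑ k2 ∈ Finset.range n,
      (1 / (n : ℝ) * (1 / (n : ℝ)) * (1 / 2)) * ((n : ℝ) + 1 + 2 * (k2 : ℝ)) =
      (1 / (n : ℝ) * (1 / (n : ℝ)) * (1 / 2)) * (((n : ℝ) + 1) * n + 2 * (n * (n - 1) / 2)) := by
    rw [← Finset.mul_sum]
    congr 1
    rw [Finset.sum_add_distrib, Finset.sum_const, Finset.card_range, ← Finset.mul_sum,
      bphmc_gauss_sum, nsmul_eq_mul]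
    ring
  rw [Finset.sum_congr rfl (fun k1 _ => hsum2), Finset.sum_const, Finset.card_range,
    nsmul_eq_mul, hNn]
  field_simp
  ring
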